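/- Let u be an isometry of a Hilbert space H and p_u = 1 - uu*. Then the block operator on H ⊕ H given by (1/√2)·[[1, u*], [u, -uu* + √2·p_u]] is unitary. -/

import Mathlib

/-- The block operator $\begin{pmatrix} a & b \\ c & d\end{pmatrix}$ on `H ⊕ H`
(the Hilbert space direct sum `WithLp 2 (H × H)`). -/
noncomputable def blockOp {H : Type*} [NormedAddCommGroup H] [InnerProductSpace ℂ H]
    [CompleteSpace H] (a b c d : H →L[ℂ] H) :
    WithLp 2 (H × H) →L[ℂ] WithLp 2 (H × H) :=
  ((WithLp.prodContinuousLinearEquiv 2 ℂ H H).symm.toContinuousLinearMap).comp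
    ((((a.comp (ContinuousLinearMap.fst ℂ H H)) + (b.comp (ContinuousLinearMap.snd ℂ H H))).prod
      ((c.comp (ContinuousLinearMap.fst ℂ H H)) + (d.comp (ContinuousLinearMap.snd ℂ H H)))).comp
      (WithLp.prodContinuousLinearEquiv 2 ℂ H H).toContinuousLinearMap)

section Aux
variable {H : Type*} [NormedAddCommGroup H] [InnerProductSpace ℂ H] [CompleteSpace H]

lemma blockOp_fst (a b c d : H →L[ℂ] H) (x : WithLp 2 (H × H)) :
    (blockOp a b c d x).fst = a x.fst + b x.snd := rfl

lemma blockOp_snd (a b c d : H →L[ℂ] H) (x : WithLp 2 (H × H)) :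
    (blockOp a b c d x).snd = c x.fst + d x.snd := rfl

omit [CompleteSpace H] in
lemma blockOp_ext {T S : WithLp 2 (H × H) →L[ℂ] WithLp 2 (H × H)}
    (h1 : ∀ x, (T x).ofLp.1 = (S x).ofLp.1) (h2 : ∀ x, (T x).ofLp.2 = (S x).ofLp.2) : T = S := by
  refine ContinuousLinearMap.ext (fun x => ?_)
  exact WithLp.ofLp_injective 2 (Prod.ext (h1 x) (h2 x))

lemma blockOp_star (a b c d : H →L[ℂ] H) :
    star (blockOp a b c d) = blockOp (star a) (star c) (star b) (star d) := by
  have : blockOp (star a) (star c) (star b) (star d)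
      = ContinuousLinearMap.adjoint (blockOp a b c d) := by
    rw [ContinuousLinearMap.eq_adjoint_iff]
    intro x y
    simp only [WithLp.prod_inner_apply, WithLp.ofLp_fst, WithLp.ofLp_snd, blockOp_fst, blockOp_snd,
      ContinuousLinearMap.star_eq_adjoint, inner_add_left, inner_add_right,
      ContinuousLinearMap.adjoint_inner_left]
    ring
  rw [this]; rfl

lemma blockOp_mul (a b c d a' b' c' d' : H →L[ℂ] H) :
    blockOp a b c d * blockOp a' b' c' d' =
      blockOp (a * a' + b * c') (a * b' + b * d') (c * a' + d * c') (c * b' + d * d') := by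
  refine blockOp_ext (fun x => ?_) (fun x => ?_) <;>
    simp [ContinuousLinearMap.mul_apply, blockOp_fst, blockOp_snd] <;> abel

lemma blockOp_smul (r : ℂ) (a b c d : H →L[ℂ] H) :
    r • blockOp a b c d = blockOp (r • a) (r • b) (r • c) (r • d) := by
  refine blockOp_ext (fun x => ?_) (fun x => ?_) <;>
    simp [blockOp_fst, blockOp_snd, smul_add]

lemma blockOp_one : (blockOp (1 : H →L[ℂ] H) 0 0 1) = 1 := by
  refine blockOp_ext (fun x => ?_) (fun x => ?_) <;> simp [blockOp_fst, blockOp_snd]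

end Aux

theorem blockOp_hadamard_like_unitary
    (H : Type*) [NormedAddCommGroup H] [InnerProductSpace ℂ H] [CompleteSpace H]
    (u : H →L[ℂ] H) (hu : star u * u = 1) :
    (((Real.sqrt 2 : ℂ))⁻¹ : ℂ) •
        blockOp 1 (star u) u
          (-(u * star u) + (Real.sqrt 2 : ℂ) • (1 - u * star u)) ∈
      unitary (WithLp 2 (H × H) →L[ℂ] WithLp 2 (H × H)) := by
  set c : ℂ := (Real.sqrt 2 : ℂ) with hc
  set q : H →L[ℂ] H := u * star u with hqdef
  set d : H →L[ℂ] H := -q + c • (1 - q) with hddef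
  set B := blockOp 1 (star u) u d with hB
  have hc2 : c * c = 2 := by
    rw [hc]; norm_cast
    rw [Real.mul_self_sqrt (by norm_num)]
  have hq : q * q = q := by
    have : q * q = u * ((star u * u) * star u) := by rw [hqdef]; noncomm_ring
    rw [this, hu, one_mul]
  have hsud : star u * q = star u := by
    have : star u * q = (star u * u) * star u := by rw [hqdef]; noncomm_ring
    rw [this, hu, one_mul]
  have hqu : q * u = u := by
    have : q * u = u * (star u * u) := by rw [hqdef]; noncomm_ring
    rw [this, hu, mul_one]
  have hdstar : star d = d := by
    simp [hddef, hqdef, star_smul, Complex.star_def, hc, Complex.conj_ofReal, mul_comm]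
  have hBstar : star B = B := by
    rw [hB, blockOp_star, star_star, star_one, hdstar]
  have h12 : (1 : H →L[ℂ] H) * star u + star u * d = 0 := by
    rw [hddef, one_mul, mul_add, mul_neg, hsud, mul_smul_comm, mul_sub, mul_one, hsud,
      sub_self, smul_zero, add_zero, add_neg_cancel]
  have h21 : u * 1 + d * u = 0 := by
    rw [hddef, mul_one, add_mul, neg_mul, hqu, smul_mul_assoc, sub_mul, one_mul, hqu,
      sub_self, smul_zero, add_zero, add_neg_cancel]
  have h11 : (1 : H →L[ℂ] H) * 1 + star u * u = (2 : ℂ) • 1 := by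
    rw [one_mul, hu]; module
  have h22 : u * star u + d * d = (2 : ℂ) • 1 := by
    have e1 : q * (1 - q) = 0 := by rw [mul_sub, mul_one, hq, sub_self]
    have e2 : (1 - q) * q = 0 := by rw [sub_mul, one_mul, hq, sub_self]
    have e3 : (1 - q) * (1 - q) = 1 - q := by
      rw [sub_mul, one_mul, mul_sub, mul_one, hq, sub_self, sub_zero]
    have hdd : d * d = q + (2 : ℂ) • (1 - q) := by
      rw [hddef]
      simp only [add_mul, mul_add, neg_mul, mul_neg, neg_neg, mul_smul_comm,
        smul_mul_assoc, smul_smul, smul_neg, e1, e2, e3, hq, smul_zero, neg_zero,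
        add_zero, zero_add, hc2]
    rw [← hqdef, hdd]
    module
  have hBB : B * B = (2 : ℂ) • (1 : WithLp 2 (H × H) →L[ℂ] WithLp 2 (H × H)) := by
    rw [hB, blockOp_mul, h11, h12, h21, h22,
      show (0 : H →L[ℂ] H) = (2 : ℂ) • 0 by simp, ← blockOp_smul, blockOp_one]
  have hstarc : star (c⁻¹) = c⁻¹ := by
    rw [hc, Complex.star_def, map_inv₀, Complex.conj_ofReal]
  have key : star (c⁻¹ • B) * (c⁻¹ • B) = 1 := by
    rw [star_smul, hstarc, hBstar, smul_mul_smul_comm, hBB, smul_smul]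
    rw [show c⁻¹ * c⁻¹ * 2 = 1 by rw [← mul_inv, hc2]; norm_num]
    rw [one_smul]
  have hTstar : star (c⁻¹ • B) = c⁻¹ • B := by rw [star_smul, hstarc, hBstar]
  rw [hTstar] at key
  exact ⟨by rw [hTstar]; exact key, by rw [hTstar]; exact key⟩
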